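/- Any deterministic algorithm that decides T-interval connectivity of sequences of length δ using only queries that access graphs of the sequence (binary intersections of previously obtained graphs and connectivity tests) must, on some input, access every one of the δ graphs: formally, if an algorithm's output is determined by the multiset of graphs it accesses and there exists an index k never accessed on a T-interval connected input G₁, then the algorithm errs on the sequence obtained from G₁ by replacing G_k with a disconnected graph. -/

import Mathlib

/-- Intersection graph over the interval of indices `[a, b]`. -/
def IG {V : Type*} (G : ℕ → SimpleGraph V) (a b : ℕ) : SimpleGraph V :=
  ⨅ t ∈ Finset.Icc a b, G t

/-- `T`-interval connectivity of the sequence `G₁, …, G_δ`. -/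
def TIntervalConnected {V : Type*} (G : ℕ → SimpleGraph V) (δ T : ℕ) : Prop :=
  ∀ t, 1 ≤ t → t ≤ δ - T + 1 → (IG G t (t + T - 1)).Connected

theorem stmt11 {V : Type*} [Nontrivial V]
    (δ T : ℕ) (hT : 1 ≤ T) (hTδ : T ≤ δ)
    (f : (ℕ → SimpleGraph V) → Bool) (S : Set ℕ)
    (hf : ∀ G G' : ℕ → SimpleGraph V, (∀ i ∈ S, G i = G' i) → f G = f G')
    (G₁ : ℕ → SimpleGraph V) (k : ℕ)
    (hk1 : 1 ≤ k) (hkδ : k ≤ δ) (hkS : k ∉ S)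
    (hG₁ : TIntervalConnected G₁ δ T) (hout : f G₁ = true) :
    f (Function.update G₁ k ⊥) = true ∧
      ¬ TIntervalConnected (Function.update G₁ k ⊥) δ T := by
  constructor
  · rw [← hout]
    apply hf
    intro i hi
    rw [Function.update_of_ne (by rintro rfl; exact hkS hi)]
  · intro h
    set t := min k (δ - T + 1) with ht
    have ht1 : 1 ≤ t := le_min hk1 (by omega)
    have ht2 : t ≤ δ - T + 1 := min_le_right _ _
    have hmem : k ∈ Finset.Icc t (t + T - 1) := by
      simp only [Finset.mem_Icc]
      constructor
      · exact min_le_left _ _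
      · rcases le_or_gt k (δ - T + 1) with h' | h'
        · omega
        · have : t = δ - T + 1 := by omega
          omega
    have hbot : IG (Function.update G₁ k ⊥) t (t + T - 1) = ⊥ := by
      apply le_bot_iff.mp
      have := iInf₂_le (f := fun i (_ : i ∈ Finset.Icc t (t + T - 1)) =>
        Function.update G₁ k (⊥ : SimpleGraph V) i) k hmem
      simpa [IG] using this
    have := h t ht1 ht2
    rw [hbot] at this
    exact SimpleGraph.not_connected_bot this
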